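/- arXiv:2201.09226 — 9 statements merged into one kernel-verified Lean document; each statement's English description precedes it below -/
import Mathlib

section
/- Let V be a type, E : V → V → Prop a directed graph, k ∈ ℕ such that for every v ∈ V the parent set Par(v) is finite with at most k elements, and λ : V → V → ℂ a family of weights on the edges. Then the following are equivalent: (i) there exists a bounded (continuous) linear operator Λ : ℓ²(V) → ℓ²(V) such that for every u ∈ V, Λ χ_u = Σ_{v ∈ Chi(u)} (λ u v) • χ_v, the sum converging (as an unconditional/tsum limit) in ℓ²(V); (ii) sup_{v ∈ V} Σ_{u ∈ Chi(v)} ‖λ v u‖² < ∞, i.e., there exists M ≥ 0 such that for every v ∈ V the family (‖λ v u‖²)_{u ∈ Chi(v)} is summable with sum at most M. -/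
open scoped ENNReal

private lemma aux_rpow_two (a : ℝ) : a ^ ((2:ℝ≥0∞)).toReal = a ^ 2 := by
  have h : ((2:ℝ≥0∞)).toReal = ((2:ℕ):ℝ) := by norm_num
  rw [h, Real.rpow_natCast]

private lemma aux_norm_chi {V : Type*} [DecidableEq V] (v : V) :
    ‖lp.single (E := fun _ : V => ℂ) 2 v (1:ℂ)‖ = 1 := by
  have := lp.norm_single (E := fun _ : V => ℂ) (p := 2) (by norm_num) v (1:ℂ)
  simpa using this

private lemma aux_pythagoras {V : Type*} [DecidableEq V] (c : V → ℂ) {S : Set V}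
    (s : Finset S) :
    ‖∑ u ∈ s, c (u:V) • lp.single (E := fun _ : V => ℂ) 2 (u:V) (1:ℂ)‖ ^ 2
      = ∑ u ∈ s, ‖c (u:V)‖ ^ 2 := by
  have hrw : ∀ u : S, c (u:V) • lp.single (E := fun _ : V => ℂ) 2 (u:V) (1:ℂ)
      = lp.single 2 (u:V) (c (u:V)) := by
    intro u
    rw [← lp.single_smul]
    simp [smul_eq_mul]
  rw [Finset.sum_congr rfl (fun u _ => hrw u)]
  have := lp.norm_sum_single (E := fun _ : V => ℂ) (p := 2) (by norm_num) c
    (s.map ⟨Subtype.val, Subtype.val_injective⟩)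
  rw [Finset.sum_map, Finset.sum_map] at this
  simp only [Function.Embedding.coeFn_mk] at this
  rw [aux_rpow_two] at this
  rw [this]
  exact Finset.sum_congr rfl (fun u _ => (aux_rpow_two _))

private lemma aux_single_zero {V : Type*} [DecidableEq V] (w : V) :
    lp.single (E := fun _ : V => ℂ) 2 w (0:ℂ) = 0 := by
  apply lp.ext
  funext j
  by_cases h : j = w
  · subst h; rw [lp.single_apply_self]; rfl
  · rw [lp.single_apply_ne _ _ _ h]; rfl


/-- Boundedness criterion for a weighted shift on a generalized directed semi-tree with
uniformly finitely many parents: the operator `Λ` with `Λ χ_u = Σ_{v ∈ Chi(u)} λ_{(u,v)} χ_v`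
exists as a bounded operator on `ℓ²(V)` iff `sup_v Σ_{u ∈ Chi(v)} |λ_{(v,u)}|² < ∞`. -/
theorem stmt_2 {V : Type*} [DecidableEq V] (E : V → V → Prop) (k : ℕ)
    (hparfin : ∀ v : V, {u | E u v}.Finite)
    (hparcard : ∀ v : V, Set.ncard {u | E u v} ≤ k)
    (lam : V → V → ℂ) :
    (∃ Λ : lp (fun _ : V => ℂ) 2 →L[ℂ] lp (fun _ : V => ℂ) 2,
        ∀ u : V,
          HasSum (fun v : {w | E u w} => lam u (v : V) • lp.single 2 (v : V) (1 : ℂ))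
            (Λ (lp.single 2 u 1))) ↔
      (∃ M : ℝ, 0 ≤ M ∧ ∀ v : V,
        ∃ s : ℝ, HasSum (fun u : {w | E v w} => ‖lam v (u : V)‖ ^ 2) s ∧ s ≤ M) := by
  constructor
  · rintro ⟨Λ, hΛ⟩
    refine ⟨‖Λ‖ ^ 2, by positivity, fun v => ?_⟩
    set x := Λ (lp.single 2 v 1) with hx
    refine ⟨‖x‖ ^ 2, ?_, ?_⟩
    · have h := hΛ v
      rw [HasSum] at h ⊢
      have hcont : Continuous (fun y : lp (fun _ : V => ℂ) 2 => ‖y‖ ^ 2) :=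
        continuous_norm.pow 2
      have h2 := (hcont.tendsto x).comp h
      refine h2.congr (fun s => ?_)
      exact aux_pythagoras (lam v) s
    · have h1 : ‖x‖ ≤ ‖Λ‖ := by
        calc ‖x‖ ≤ ‖Λ‖ * ‖lp.single (E := fun _ : V => ℂ) 2 v (1:ℂ)‖ := Λ.le_opNorm _
          _ = ‖Λ‖ := by rw [aux_norm_chi, mul_one]
      exact pow_le_pow_left₀ (norm_nonneg _) h1 2
  · rintro ⟨M, hM0, hM⟩
    classical
    set P : V → Finset V := fun w => (hparfin w).toFinset with hP
    have hPmem : ∀ w u, u ∈ P w ↔ E u w := fun w u => (hparfin w).mem_toFinset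
    have hPcard : ∀ w, (P w).card ≤ k := by
      intro w
      have h := hparcard w
      rwa [Set.ncard_eq_toFinset_card _ (hparfin w)] at h
    -- partial sums over children are bounded by M
    have chi_bound : ∀ (u : V) (F : Finset V), (∀ w ∈ F, E u w) → ∑ w ∈ F, ‖lam u w‖ ^ 2 ≤ M := by
      intro u F hF
      obtain ⟨s, hs, hsM⟩ := hM u
      have hinj : Function.Injective
          (fun w : {x // x ∈ F} => (⟨w.1, hF w.1 w.2⟩ : {w | E u w})) := by
        intro a b hab
        exact Subtype.ext (congrArg (fun y : {w | E u w} => (y : V)) hab)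
      have h1 := sum_le_hasSum (F.attach.map ⟨_, hinj⟩) (fun i _ => by positivity) hs
      rw [Finset.sum_map] at h1
      simp only [Function.Embedding.coeFn_mk] at h1
      rw [Finset.sum_attach F (fun w => ‖lam u w‖ ^ 2)] at h1
      linarith
    -- key finite bound
    have key : ∀ (x : lp (fun _ : V => ℂ) 2) (S : Finset V),
        ∑ w ∈ S, ‖∑ u ∈ P w, lam u w * x u‖ ^ 2 ≤ (k * M) * ‖x‖ ^ 2 := by
      intro x S
      have step1 : ∀ w, ‖∑ u ∈ P w, lam u w * x u‖ ^ 2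
          ≤ (k : ℝ) * ∑ u ∈ P w, ‖lam u w‖ ^ 2 * ‖x u‖ ^ 2 := by
        intro w
        have h1 : ‖∑ u ∈ P w, lam u w * x u‖ ≤ ∑ u ∈ P w, ‖lam u w * x u‖ := norm_sum_le _ _
        have h2 : ‖∑ u ∈ P w, lam u w * x u‖ ^ 2 ≤ (∑ u ∈ P w, ‖lam u w * x u‖) ^ 2 :=
          pow_le_pow_left₀ (norm_nonneg _) h1 2
        have h3 : (∑ u ∈ P w, ‖lam u w * x u‖) ^ 2
            ≤ ((P w).card : ℝ) * ∑ u ∈ P w, ‖lam u w * x u‖ ^ 2 :=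
          sq_sum_le_card_mul_sum_sq
        have h4 : ((P w).card : ℝ) * ∑ u ∈ P w, ‖lam u w * x u‖ ^ 2
            ≤ (k : ℝ) * ∑ u ∈ P w, ‖lam u w‖ ^ 2 * ‖x u‖ ^ 2 := by
          have hcard : ((P w).card : ℝ) ≤ (k : ℝ) := by exact_mod_cast hPcard w
          have hsum : ∑ u ∈ P w, ‖lam u w * x u‖ ^ 2
              = ∑ u ∈ P w, ‖lam u w‖ ^ 2 * ‖x u‖ ^ 2 :=
            Finset.sum_congr rfl (fun u _ => by rw [norm_mul, mul_pow])
          rw [hsum]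
          exact mul_le_mul_of_nonneg_right hcard (Finset.sum_nonneg fun u _ => by positivity)
        linarith
      have swap : ∑ w ∈ S, ∑ u ∈ P w, ‖lam u w‖ ^ 2 * ‖x u‖ ^ 2 ≤ M * ‖x‖ ^ 2 := by
        set Q := S.biUnion P with hQ
        have hsub : ∀ w ∈ S, P w ⊆ Q := fun w hw => Finset.subset_biUnion_of_mem P hw
        have e1 : ∑ w ∈ S, ∑ u ∈ P w, ‖lam u w‖ ^ 2 * ‖x u‖ ^ 2
            = ∑ w ∈ S, ∑ u ∈ Q, (if u ∈ P w then ‖lam u w‖ ^ 2 * ‖x u‖ ^ 2 else 0) := by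
          refine Finset.sum_congr rfl (fun w hw => ?_)
          rw [Finset.sum_ite_mem, Finset.inter_eq_right.mpr (hsub w hw)]
        rw [e1, Finset.sum_comm]
        have e2 : ∀ u ∈ Q, ∑ w ∈ S, (if u ∈ P w then ‖lam u w‖ ^ 2 * ‖x u‖ ^ 2 else 0)
            ≤ ‖x u‖ ^ 2 * M := by
          intro u _
          rw [Finset.sum_ite, Finset.sum_const_zero, add_zero]
          have hmul : ∑ w ∈ S.filter (fun w => u ∈ P w), ‖lam u w‖ ^ 2 * ‖x u‖ ^ 2
              = ‖x u‖ ^ 2 * ∑ w ∈ S.filter (fun w => u ∈ P w), ‖lam u w‖ ^ 2 := by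
            rw [Finset.mul_sum]
            exact Finset.sum_congr rfl (fun w _ => by ring)
          rw [hmul]
          have hE : ∀ w ∈ S.filter (fun w => u ∈ P w), E u w := by
            intro w hw
            exact (hPmem w u).mp (Finset.mem_filter.mp hw).2
          exact mul_le_mul_of_nonneg_left (chi_bound u _ hE) (by positivity)
        calc ∑ u ∈ Q, ∑ w ∈ S, (if u ∈ P w then ‖lam u w‖ ^ 2 * ‖x u‖ ^ 2 else 0)
            ≤ ∑ u ∈ Q, ‖x u‖ ^ 2 * M := Finset.sum_le_sum e2
          _ = (∑ u ∈ Q, ‖x u‖ ^ 2) * M := by rw [Finset.sum_mul]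
          _ ≤ ‖x‖ ^ 2 * M := by
              refine mul_le_mul_of_nonneg_right ?_ hM0
              have := lp.sum_rpow_le_norm_rpow (E := fun _ : V => ℂ) (p := 2) (by norm_num) x Q
              rw [aux_rpow_two] at this
              refine le_trans (le_of_eq ?_) this
              exact Finset.sum_congr rfl (fun u _ => (aux_rpow_two _).symm)
          _ = M * ‖x‖ ^ 2 := mul_comm _ _
      calc ∑ w ∈ S, ‖∑ u ∈ P w, lam u w * x u‖ ^ 2
          ≤ ∑ w ∈ S, (k : ℝ) * ∑ u ∈ P w, ‖lam u w‖ ^ 2 * ‖x u‖ ^ 2 :=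
            Finset.sum_le_sum (fun w _ => step1 w)
        _ = (k : ℝ) * ∑ w ∈ S, ∑ u ∈ P w, ‖lam u w‖ ^ 2 * ‖x u‖ ^ 2 := by rw [Finset.mul_sum]
        _ ≤ (k : ℝ) * (M * ‖x‖ ^ 2) := mul_le_mul_of_nonneg_left swap (by positivity)
        _ = (k * M) * ‖x‖ ^ 2 := by ring
    have hmem : ∀ x : lp (fun _ : V => ℂ) 2,
        Memℓp (fun w => ∑ u ∈ P w, lam u w * x u) 2 := by
      intro x
      refine memℓp_gen' (C := (k * M) * ‖x‖ ^ 2) (fun S => ?_)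
      refine le_trans (le_of_eq ?_) (key x S)
      exact Finset.sum_congr rfl (fun w _ => (aux_rpow_two _))
    let T' : lp (fun _ : V => ℂ) 2 →ₗ[ℂ] lp (fun _ : V => ℂ) 2 :=
      { toFun := fun x => ⟨fun w => ∑ u ∈ P w, lam u w * x u, hmem x⟩
        map_add' := by
          intro x y
          apply lp.ext
          funext w
          show ∑ u ∈ P w, lam u w * (x + y) u
              = (∑ u ∈ P w, lam u w * x u) + ∑ u ∈ P w, lam u w * y u
          rw [← Finset.sum_add_distrib]
          refine Finset.sum_congr rfl (fun u _ => ?_)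
          rw [lp.coeFn_add, Pi.add_apply, mul_add]
        map_smul' := by
          intro c x
          apply lp.ext
          funext w
          show ∑ u ∈ P w, lam u w * (c • x) u = c • ∑ u ∈ P w, lam u w * x u
          rw [smul_eq_mul, Finset.mul_sum]
          refine Finset.sum_congr rfl (fun u _ => ?_)
          rw [lp.coeFn_smul, Pi.smul_apply, smul_eq_mul]
          ring }
    have hbound : ∀ x, ‖T' x‖ ≤ Real.sqrt (k * M) * ‖x‖ := by
      intro x
      refine lp.norm_le_of_forall_sum_le (by norm_num) (by positivity) (fun S => ?_)
      have h1 : ∑ w ∈ S, ‖(T' x) w‖ ^ ((2:ℝ≥0∞)).toReal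
          = ∑ w ∈ S, ‖∑ u ∈ P w, lam u w * x u‖ ^ 2 :=
        Finset.sum_congr rfl (fun w _ => (aux_rpow_two _))
      rw [h1, aux_rpow_two, mul_pow, Real.sq_sqrt (by positivity)]
      exact key x S
    refine ⟨T'.mkContinuous _ hbound, fun u => ?_⟩
    rw [LinearMap.mkContinuous_apply]
    set f : lp (fun _ : V => ℂ) 2 := T' (lp.single 2 u 1) with hf
    have hfcoord : ∀ w, f w = if E u w then lam u w else 0 := by
      intro w
      show ∑ u' ∈ P w, lam u' w * (lp.single (E := fun _ : V => ℂ) 2 u (1:ℂ)) u' = _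
      have hterm : ∀ u' ∈ P w,
          lam u' w * (lp.single (E := fun _ : V => ℂ) 2 u (1:ℂ)) u'
            = if u' = u then lam u w else 0 := by
        intro u' _
        by_cases h : u' = u
        · subst h; rw [lp.single_apply_self, if_pos rfl, mul_one]
        · rw [lp.single_apply_ne _ _ _ h, if_neg h, mul_zero]
      rw [Finset.sum_congr rfl hterm, Finset.sum_ite_eq' (P w) u (fun _ => lam u w)]
      by_cases h : E u w
      · rw [if_pos ((hPmem w u).mpr h), if_pos h]
      · rw [if_neg (fun hmem' => h ((hPmem w u).mp hmem')), if_neg h]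
    have h1 : HasSum (fun w : V => lp.single 2 w (f w)) f :=
      lp.hasSum_single (by norm_num) f
    have hsupp : Function.support (fun w : V => lp.single (E := fun _ : V => ℂ) 2 w (f w))
        ⊆ {w | E u w} := by
      intro w hw
      by_contra hE
      have hE' : ¬ E u w := hE
      apply hw
      have hz : f w = (0:ℂ) := by rw [hfcoord w, if_neg hE']
      show lp.single (E := fun _ : V => ℂ) 2 w (f w) = 0
      rw [hz]
      exact aux_single_zero w
    have h2 : HasSum (fun w : {w | E u w} => lp.single (E := fun _ : V => ℂ) 2 (w:V) (f w)) f :=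
      (hasSum_subtype_iff_of_support_subset hsupp).mpr h1
    have heq : (fun v : {w | E u w} => lam u (v : V) • lp.single (E := fun _ : V => ℂ) 2 (v : V) (1 : ℂ))
        = fun w : {w | E u w} => lp.single 2 (w:V) (f w) := by
      funext v
      have hv : E u (v : V) := v.2
      rw [hfcoord, if_pos hv, ← lp.single_smul]
      simp [smul_eq_mul]
    rw [heq]
    exact h2
end

section
/- Let V be a type, E : V → V → Prop a directed graph, k ∈ ℕ such that for every v ∈ V the parent set Par(v) is finite with at most k elements, and β : V → ℝ with β v > 0 for all v. Then the following are equivalent: (i) there exists a bounded (continuous) linear operator T : ℓ²(V) → ℓ²(V) such that for every v ∈ V, T χ_v = Σ_{u ∈ Chi(v)} (β u / β v) • χ_u, the sum converging in ℓ²(V); (ii) sup_{v ∈ V} Σ_{u ∈ Chi(v)} (β u)² / (β v)² < ∞, i.e., there exists M ≥ 0 such that for every v the family ((β u)²/(β v)²)_{u ∈ Chi(v)} is summable with sum at most M. (This is the boundedness criterion for the multiplication operator T_{p_i} on the space of formal power series ℋ²(β), transported to ℓ²(V) via the orthonormal basis S_v/β(v) ↦ χ_v.) -/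
set_option maxHeartbeats 1000000

open scoped ENNReal

namespace Stmt3Aux

lemma toReal_two : ((2:ℝ≥0∞)).toReal = 2 := by simp

lemma toReal_two_pos : (0:ℝ) < ((2:ℝ≥0∞)).toReal := by rw [toReal_two]; norm_num

lemma rpow_two' (r : ℝ) : r ^ ((2:ℝ≥0∞)).toReal = r ^ (2:ℕ) := by
  rw [show ((2:ℝ≥0∞)).toReal = ((2:ℕ):ℝ) by simp, Real.rpow_natCast]

variable {V : Type*}

noncomputable def evalCLM (w : V) : lp (fun _ : V => ℂ) 2 →L[ℂ] ℂ :=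
  LinearMap.mkContinuous
    { toFun := fun f => f w
      map_add' := fun f g => by simp [lp.coeFn_add]
      map_smul' := fun c f => by simp [lp.coeFn_smul] }
    1 (fun f => by
      show ‖(f : V → ℂ) w‖ ≤ 1 * ‖f‖
      simpa using lp.norm_apply_le_norm (by norm_num : (2 : ℝ≥0∞) ≠ 0) f w)

@[simp] lemma evalCLM_apply (w : V) (f : lp (fun _ : V => ℂ) 2) : evalCLM w f = f w := rfl

lemma single_zero [DecidableEq V] (w : V) :
    lp.single 2 w (0:ℂ) = (0 : lp (fun _ : V => ℂ) 2) := by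
  refine lp.ext (funext fun j => ?_)
  by_cases h : j = w
  · subst h; simp [lp.single_apply_self]
  · simp [lp.single_apply_ne _ _ _ h]

end Stmt3Aux

open Stmt3Aux in
/-- Boundedness criterion for the multiplication operator `T_{p_i}` on `ℋ²(β)`,
transported to `ℓ²(V)`: the β-weighted shift on the graph exists as a bounded operator
iff `sup_v Σ_{u ∈ Chi(v)} β(u)²/β(v)² < ∞`, assuming every parent set has at most `k`
elements. -/
theorem stmt_3 {V : Type*} [DecidableEq V] (E : V → V → Prop) (k : ℕ)
    (hparfin : ∀ v : V, {u | E u v}.Finite)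
    (hparcard : ∀ v : V, Set.ncard {u | E u v} ≤ k)
    (β : V → ℝ) (hβ : ∀ v : V, 0 < β v) :
    (∃ T : lp (fun _ : V => ℂ) 2 →L[ℂ] lp (fun _ : V => ℂ) 2,
        ∀ v : V,
          HasSum
            (fun u : {w | E v w} => ((β (u : V) / β v : ℝ) : ℂ) • lp.single 2 (u : V) (1 : ℂ))
            (T (lp.single 2 v 1))) ↔
      (∃ M : ℝ, 0 ≤ M ∧ ∀ v : V,
        ∃ s : ℝ, HasSum (fun u : {w | E v w} => (β (u : V)) ^ 2 / (β v) ^ 2) s ∧ s ≤ M) := by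
  classical
  constructor
  · rintro ⟨T, hT⟩
    refine ⟨‖T‖^2, by positivity, fun v => ?_⟩
    set f : lp (fun _ : V => ℂ) 2 := T (lp.single 2 v 1) with hf
    have hcoord : ∀ w : V, f w = if E v w then ((β w / β v : ℝ) : ℂ) else 0 := by
      intro w
      have h1 := (evalCLM w).hasSum (hT v)
      simp only [map_smul, evalCLM_apply, smul_eq_mul] at h1
      by_cases hw : E v w
      · have h2 : HasSum
            (fun u : {w' | E v w'} =>
              if u = (⟨w, hw⟩ : {w' | E v w'}) then ((β w / β v : ℝ) : ℂ) else 0)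
            ((β w / β v : ℝ) : ℂ) := hasSum_ite_eq _ _
        have heq : (fun u : {w' | E v w'} =>
            ((β (u:V) / β v : ℝ):ℂ) * (lp.single 2 (u:V) (1:ℂ) : lp (fun _ : V => ℂ) 2) w)
            = fun u => if u = (⟨w, hw⟩ : {w' | E v w'}) then ((β w / β v : ℝ):ℂ) else 0 := by
          funext u
          by_cases h : u = (⟨w, hw⟩ : {w' | E v w'})
          · subst h; simp [lp.single_apply_self]
          · have hne : w ≠ (u:V) := fun hh => h (Subtype.ext hh.symm)
            simp [lp.single_apply_ne _ _ _ hne, h, Pi.single_apply, hne]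
        rw [heq] at h1
        rw [if_pos hw]
        exact h1.unique h2
      · have heq : (fun u : {w' | E v w'} =>
            ((β (u:V) / β v : ℝ):ℂ) * (lp.single 2 (u:V) (1:ℂ) : lp (fun _ : V => ℂ) 2) w)
            = fun _ => (0:ℂ) := by
          funext u
          have hne : w ≠ (u:V) := fun hh => hw (hh ▸ u.2)
          simp [lp.single_apply_ne _ _ _ hne, Pi.single_apply, hne]
        rw [heq] at h1
        rw [if_neg hw]
        exact h1.unique hasSum_zero
    have hsummable : Summable (fun w => ‖f w‖ ^ (2:ℕ)) := by
      have := (lp.memℓp f).summable toReal_two_pos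
      simpa [rpow_two'] using this
    have hFeq : (fun w => ‖f w‖ ^ (2:ℕ))
        = Set.indicator {w | E v w} (fun w => β w ^ 2 / β v ^ 2) := by
      funext w
      rw [hcoord w]
      by_cases hw : E v w
      · rw [if_pos hw, Set.indicator_of_mem (show w ∈ {w | E v w} from hw),
          Complex.norm_real, Real.norm_eq_abs, sq_abs, div_pow]
      · rw [if_neg hw, Set.indicator_of_notMem (show w ∉ {w | E v w} from hw)]
        simp
    have hsub : Summable (fun u : {w | E v w} => (β (u:V)) ^ 2 / (β v) ^ 2) := by
      refine (summable_subtype_iff_indicator (s := {w | E v w})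
        (f := fun w => β w ^ 2 / β v ^ 2)).mpr ?_
      rw [← hFeq]; exact hsummable
    refine ⟨∑' u : {w | E v w}, (β (u:V)) ^ 2 / (β v) ^ 2, hsub.hasSum, ?_⟩
    have h1 : (∑' u : {w | E v w}, (β (u:V)) ^ 2 / (β v) ^ 2) = ∑' w, ‖f w‖ ^ (2:ℕ) := by
      rw [tsum_subtype {w | E v w} (fun w => β w ^ 2 / β v ^ 2), ← hFeq]
    have h2 : (∑' w, ‖f w‖ ^ (2:ℕ)) = ‖f‖ ^ (2:ℕ) := by
      have := lp.norm_rpow_eq_tsum toReal_two_pos f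
      simp only [rpow_two'] at this
      exact this.symm
    have h3 : ‖f‖ ≤ ‖T‖ := by
      have h4 : ‖(lp.single 2 v (1:ℂ) : lp (fun _ : V => ℂ) 2)‖ = 1 := by
        simpa using lp.norm_single (E := fun _ : V => ℂ) toReal_two_pos (fun _ => (1:ℂ)) v
      calc ‖f‖ ≤ ‖T‖ * ‖(lp.single 2 v (1:ℂ) : lp (fun _ : V => ℂ) 2)‖ := T.le_opNorm _
        _ = ‖T‖ := by rw [h4, mul_one]
    rw [h1, h2]
    exact pow_le_pow_left₀ (norm_nonneg f) h3 2
  · rintro ⟨M, hM0, hM⟩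
    choose s hs hsM using hM
    set A : V → V → ℝ := fun w v' => if E v' w then β w / β v' else 0 with hA
    have hind : ∀ v' : V,
        HasSum (Set.indicator {w | E v' w} (fun w => β w ^ 2 / β v' ^ 2)) (s v') :=
      fun v' => hasSum_subtype_iff_indicator.mp (hs v')
    set y : (∀ _ : V, ℂ) → V → ℂ :=
      fun x w => ∑ v' ∈ (hparfin w).toFinset, ((A w v' : ℝ) : ℂ) * x v' with hy
    have key : ∀ (x : lp (fun _ : V => ℂ) 2) (F : Finset V),
        ∑ w ∈ F, ‖y x w‖ ^ (2:ℕ) ≤ ((k:ℝ) * M) * ‖x‖ ^ (2:ℕ) := by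
      intro x F
      have hstep : ∀ w : V, ‖y x w‖ ^ (2:ℕ)
          ≤ (k:ℝ) * ∑ v' ∈ (hparfin w).toFinset, (A w v') ^ 2 * ‖x v'‖ ^ 2 := by
        intro w
        have h1 : ‖y x w‖ ≤ ∑ v' ∈ (hparfin w).toFinset, |A w v'| * ‖x v'‖ := by
          refine (norm_sum_le _ _).trans (le_of_eq ?_)
          refine Finset.sum_congr rfl fun v' _ => ?_
          rw [norm_mul, Complex.norm_real, Real.norm_eq_abs]
        have h2 : ‖y x w‖ ^ (2:ℕ)
            ≤ (∑ v' ∈ (hparfin w).toFinset, |A w v'| * ‖x v'‖) ^ (2:ℕ) :=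
          pow_le_pow_left₀ (norm_nonneg _) h1 2
        refine h2.trans ?_
        have h3 := sq_sum_le_card_mul_sum_sq
          (s := (hparfin w).toFinset) (f := fun v' => |A w v'| * ‖x v'‖)
        simp only [mul_pow, sq_abs] at h3
        refine h3.trans ?_
        have hcard : (((hparfin w).toFinset.card : ℝ)) ≤ (k:ℝ) := by
          have := hparcard w
          rw [Set.ncard_eq_toFinset_card _ (hparfin w)] at this
          exact_mod_cast this
        refine mul_le_mul_of_nonneg_right hcard ?_
        exact Finset.sum_nonneg fun v' _ => by positivity
      set G := F.biUnion (fun w => (hparfin w).toFinset) with hG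
      have hsubs : ∀ w ∈ F, ∑ v' ∈ (hparfin w).toFinset, (A w v') ^ 2 * ‖x v'‖ ^ 2
          = ∑ v' ∈ G, (A w v') ^ 2 * ‖x v'‖ ^ 2 := by
        intro w hw
        refine Finset.sum_subset (Finset.subset_biUnion_of_mem (fun w => (hparfin w).toFinset) hw) ?_
        intro v' _ hv'
        have hne : ¬ E v' w := fun h => hv' ((hparfin w).mem_toFinset.mpr h)
        simp [hA, hne]
      calc ∑ w ∈ F, ‖y x w‖ ^ (2:ℕ)
          ≤ ∑ w ∈ F, (k:ℝ) * ∑ v' ∈ (hparfin w).toFinset, (A w v') ^ 2 * ‖x v'‖ ^ 2 :=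
            Finset.sum_le_sum fun w _ => hstep w
        _ = (k:ℝ) * ∑ w ∈ F, ∑ v' ∈ G, (A w v') ^ 2 * ‖x v'‖ ^ 2 := by
            rw [← Finset.mul_sum]
            congr 1
            exact Finset.sum_congr rfl hsubs
        _ = (k:ℝ) * ∑ v' ∈ G, ∑ w ∈ F, (A w v') ^ 2 * ‖x v'‖ ^ 2 := by
            rw [Finset.sum_comm]
        _ ≤ (k:ℝ) * ∑ v' ∈ G, M * ‖x v'‖ ^ 2 := by
            refine mul_le_mul_of_nonneg_left (Finset.sum_le_sum fun v' _ => ?_)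
              (by positivity)
            have hAe : ∀ w : V, (A w v') ^ 2
                = Set.indicator {w' | E v' w'} (fun w' => β w' ^ 2 / β v' ^ 2) w := by
              intro w
              by_cases h : E v' w <;>
                simp [hA, h, Set.indicator, div_pow]
            calc ∑ w ∈ F, (A w v') ^ 2 * ‖x v'‖ ^ 2
                = (∑ w ∈ F, Set.indicator {w' | E v' w'} (fun w' => β w' ^ 2 / β v' ^ 2) w)
                    * ‖x v'‖ ^ 2 := by
                  rw [Finset.sum_mul]
                  exact Finset.sum_congr rfl fun w _ => by rw [hAe]
              _ ≤ s v' * ‖x v'‖ ^ 2 := by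
                  refine mul_le_mul_of_nonneg_right ?_ (by positivity)
                  refine sum_le_hasSum F (fun w _ => ?_) (hind v')
                  exact Set.indicator_nonneg (fun w' _ => by positivity) w
              _ ≤ M * ‖x v'‖ ^ 2 :=
                  mul_le_mul_of_nonneg_right (hsM v') (by positivity)
        _ = ((k:ℝ) * M) * ∑ v' ∈ G, ‖x v'‖ ^ 2 := by
            rw [← Finset.mul_sum, mul_assoc]
        _ ≤ ((k:ℝ) * M) * ‖x‖ ^ (2:ℕ) := by
            refine mul_le_mul_of_nonneg_left ?_ (by positivity)
            have := lp.sum_rpow_le_norm_rpow toReal_two_pos x G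
            simpa [rpow_two'] using this
    have hmem : ∀ x : lp (fun _ : V => ℂ) 2, Memℓp (y x) 2 := by
      intro x
      refine memℓp_gen' (C := ((k:ℝ) * M) * ‖x‖ ^ (2:ℕ)) (fun F => ?_)
      simpa [rpow_two'] using key x F
    let L : lp (fun _ : V => ℂ) 2 →ₗ[ℂ] lp (fun _ : V => ℂ) 2 :=
      { toFun := fun x => ⟨y x, hmem x⟩
        map_add' := by
          intro x x'
          refine lp.ext (funext fun w => ?_)
          simp only [hy, lp.coeFn_add, Pi.add_apply, mul_add, Finset.sum_add_distrib]
        map_smul' := by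
          intro c x
          refine lp.ext (funext fun w => ?_)
          simp only [hy, lp.coeFn_smul, Pi.smul_apply, smul_eq_mul, RingHom.id_apply,
            Finset.mul_sum]
          refine Finset.sum_congr rfl fun v' _ => ?_
          ring }
    have hbound : ∀ x, ‖L x‖ ≤ Real.sqrt ((k:ℝ) * M) * ‖x‖ := by
      intro x
      have hC : (0:ℝ) ≤ Real.sqrt ((k:ℝ) * M) * ‖x‖ := by positivity
      refine lp.norm_le_of_forall_sum_le toReal_two_pos hC (fun F => ?_)
      have h1 := key x F
      have h2 : (Real.sqrt ((k:ℝ) * M) * ‖x‖) ^ (2:ℕ) = ((k:ℝ) * M) * ‖x‖ ^ (2:ℕ) := by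
        rw [mul_pow, Real.sq_sqrt (by positivity)]
      simp only [rpow_two', h2]
      exact h1
    refine ⟨L.mkContinuous _ hbound, fun v => ?_⟩
    set T := L.mkContinuous _ hbound with hT
    set g : V → ℂ := fun w => if E v w then ((β w / β v : ℝ) : ℂ) else 0 with hg
    have hcoord : ∀ w, y (lp.single 2 v 1) w = g w := by
      intro w
      have hterm : ∀ v' : V,
          ((A w v' : ℝ):ℂ) * (lp.single 2 v (1:ℂ) : lp (fun _ : V => ℂ) 2) v'
          = if v' = v then ((A w v' : ℝ):ℂ) else 0 := by
        intro v'
        by_cases h : v' = v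
        · subst h; simp [lp.single_apply_self]
        · simp [lp.single_apply_ne _ _ _ h, h]
      calc y (lp.single 2 v 1) w
          = ∑ v' ∈ (hparfin w).toFinset, if v' = v then ((A w v' : ℝ):ℂ) else 0 :=
            Finset.sum_congr rfl fun v' _ => hterm v'
        _ = if v ∈ (hparfin w).toFinset then ((A w v : ℝ):ℂ) else 0 :=
            Finset.sum_ite_eq' _ _ _
        _ = g w := by
            by_cases h : E v w
            · rw [if_pos ((hparfin w).mem_toFinset.mpr h)]
              simp only [hg, hA, if_pos h]
            · rw [if_neg (fun hh => h ((hparfin w).mem_toFinset.mp hh))]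
              simp only [hg, if_neg h]
    have hTx : ((T (lp.single 2 v 1)) : ∀ _ : V, ℂ) = g := funext hcoord
    have hhs : HasSum (fun w : V => lp.single 2 w ((T (lp.single 2 v 1)) w))
        (T (lp.single 2 v 1)) := lp.hasSum_single (by simp) _
    have hhs' : HasSum (fun w : V => lp.single (E := fun _ : V => ℂ) 2 w (g w)) (T (lp.single 2 v 1)) := by
      have : (fun w : V => lp.single 2 w ((T (lp.single 2 v 1)) w))
          = fun w : V => lp.single (E := fun _ : V => ℂ) 2 w (g w) := by
        funext w
        rw [congrFun hTx w]
      rwa [this] at hhs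
    have hsupp : Function.support
        (fun w : V => lp.single (E := fun _ : V => ℂ) 2 w (g w)) ⊆ {w | E v w} := by
      intro w hw
      by_contra h
      apply hw
      have hz : g w = 0 := by rw [hg]; exact if_neg h
      show lp.single (E := fun _ : V => ℂ) 2 w (g w) = 0
      rw [hz]
      exact single_zero w
    have hfinal := (hasSum_subtype_iff_of_support_subset hsupp).2 hhs'
    have heq : (fun u : {w | E v w} =>
        ((β (u:V) / β v : ℝ):ℂ) • lp.single 2 (u:V) (1:ℂ))
        = fun u : {w | E v w} => lp.single (E := fun _ : V => ℂ) 2 (u:V) (g (u:V)) := by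
      funext u
      have hu : E v (u:V) := u.2
      rw [show g (u:V) = ((β (u:V) / β v : ℝ):ℂ) from if_pos hu]
      have h2 := lp.single_smul (E := fun _ : V => ℂ) 2 (u:V)
        (((β (u:V) / β v : ℝ):ℂ)) (1:ℂ)
      rw [smul_eq_mul, mul_one] at h2
      exact h2.symm
    rw [heq]
    exact hfinal
end

section
/- Let V be a type, E : V → V → Prop a directed graph, and β : V → ℝ with β v > 0 for all v. Suppose Λ : ℓ²(V) → ℓ²(V) is a bounded linear operator such that for every v ∈ V, Λ χ_v = Σ_{u ∈ Chi(v)} (β u / β v) • χ_u, the sum converging in ℓ²(V). Then the Hilbert-space adjoint Λ† satisfies, for every v ∈ V, Λ† χ_v = Σ_{u ∈ Par(v)} (β v / β u) • χ_u, the sum converging in ℓ²(V); in particular Λ† χ_v = 0 whenever v is a root (Par(v) = ∅). -/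
open scoped InnerProductSpace

/-- The adjoint of a β-weighted shift on a directed graph: if
`Λ χ_v = Σ_{u ∈ Chi(v)} (β u / β v) • χ_u` for every `v`, then
`Λ† χ_v = Σ_{u ∈ Par(v)} (β v / β u) • χ_u`; in particular `Λ† χ_v = 0` at roots. -/
theorem stmt_4 {V : Type*} [DecidableEq V] (E : V → V → Prop)
    (β : V → ℝ) (hβ : ∀ v : V, 0 < β v)
    (Λ : lp (fun _ : V => ℂ) 2 →L[ℂ] lp (fun _ : V => ℂ) 2)
    (hΛ : ∀ v : V,
      HasSum
        (fun u : {w | E v w} => ((β (u : V) / β v : ℝ) : ℂ) • lp.single 2 (u : V) (1 : ℂ))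
        (Λ (lp.single 2 v 1))) :
    (∀ v : V,
      HasSum
        (fun u : {w | E w v} => ((β v / β (u : V) : ℝ) : ℂ) • lp.single 2 (u : V) (1 : ℂ))
        (ContinuousLinearMap.adjoint Λ (lp.single 2 v 1))) ∧
    (∀ v : V, {u | E u v} = ∅ →
      ContinuousLinearMap.adjoint Λ (lp.single 2 v 1) = 0) := by
  classical
  set χ : V → lp (fun _ : V => ℂ) 2 := fun u => lp.single 2 u 1 with hχ
  -- coordinate of Λ χ_u at v, via inner product
  have key : ∀ u v : V, ⟪χ v, Λ (χ u)⟫_ℂ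
      = if E u v then ((β v / β u : ℝ) : ℂ) else 0 := by
    intro u v
    have h := (hΛ u).mapL (innerSL ℂ (χ v))
    refine h.unique ?_
    by_cases hEuv : E u v
    · have h2 := hasSum_single (f := fun w : {w | E u w} =>
        (innerSL ℂ (χ v)) (((β (w : V) / β u : ℝ) : ℂ) • χ (w : V)))
        (⟨v, hEuv⟩ : {w | E u w}) ?_
      · simpa [hχ, inner_smul_right, lp.inner_single_left,
          lp.single_apply, hEuv] using h2
      · intro w hw
        have hwv : v ≠ (w : V) := fun h' => hw (Subtype.ext h'.symm)
        simp [hχ, inner_smul_right, lp.inner_single_left, lp.single_apply, hwv]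
    · rw [if_neg hEuv]
      have hz : (fun w : {w | E u w} =>
          (innerSL ℂ (χ v)) (((β (w : V) / β u : ℝ) : ℂ) • χ (w : V))) = fun _ => 0 := by
        funext w
        have hwv : v ≠ (w : V) := fun h' => hEuv (h' ▸ w.2)
        simp [hχ, inner_smul_right, lp.inner_single_left, lp.single_apply, hwv]
      rw [hz]
      exact hasSum_zero
  have main : ∀ v : V,
      HasSum
        (fun u : {w | E w v} => ((β v / β (u : V) : ℝ) : ℂ) • lp.single 2 (u : V) (1 : ℂ))
        (ContinuousLinearMap.adjoint Λ (lp.single 2 v 1)) := by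
    intro v
    set g := ContinuousLinearMap.adjoint Λ (lp.single 2 v 1) with hgdef
    have hg : ∀ u : V, (g : ∀ _ : V, ℂ) u = if E u v then ((β v / β u : ℝ) : ℂ) else 0 := by
      intro u
      have h1 : ⟪χ u, g⟫_ℂ = (g : ∀ _ : V, ℂ) u := by
        simp [hχ, lp.inner_single_left]
      have h2 : ⟪χ u, g⟫_ℂ = ⟪Λ (χ u), χ v⟫_ℂ := by
        rw [hgdef, hχ, ContinuousLinearMap.adjoint_inner_right]
      rw [← h1, h2, ← inner_conj_symm, key u v]
      split_ifs <;> simp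
    have hs : HasSum (fun u : V => lp.single 2 u ((g : ∀ _ : V, ℂ) u)) g :=
      lp.hasSum_single (by norm_num) g
    have hsupp : Function.support (fun u : V => lp.single 2 u ((g : ∀ _ : V, ℂ) u))
        ⊆ {w | E w v} := by
      intro u hu
      by_contra hE
      apply hu
      have hE' : ¬ E u v := hE
      simp only [hg u, if_neg hE']
      rw [show (0 : ℂ) = (0 : ℂ) • (1 : ℂ) by simp, lp.single_smul, zero_smul]
    have hs' := (hasSum_subtype_iff_of_support_subset hsupp).2 hs
    have heq : (fun u : {w | E w v} =>
        ((β v / β (u : V) : ℝ) : ℂ) • lp.single (E := fun _ : V => ℂ) 2 (u : V) (1 : ℂ))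
        = fun u : {w | E w v} => lp.single 2 (u : V) ((g : ∀ _ : V, ℂ) (u : V)) := by
      funext u
      rw [hg, if_pos (show E (u : V) v from u.2), ← lp.single_smul, smul_eq_mul, mul_one]
    rw [heq]
    exact hs'
  refine ⟨main, ?_⟩
  intro v hv
  haveI hemp : IsEmpty {w | E w v} := by
    rw [show {w | E w v} = (∅ : Set V) from hv]
    exact Set.isEmpty_coe_sort.mpr rfl
  have h0 : HasSum (fun u : {w | E w v} =>
      ((β v / β (u : V) : ℝ) : ℂ) • χ (u : V)) 0 := by
    have he : (fun u : {w | E w v} =>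
        ((β v / β (u : V) : ℝ) : ℂ) • χ (u : V)) = fun _ => 0 :=
      funext fun u => hemp.elim u
    rw [he]
    exact hasSum_zero
  exact (main v).unique h0
end

section
/- Let n ∈ ℕ, V a type, E : V → V → Prop a directed graph in which every children set Chi(v) is finite, and β : V → ℝ with β v > 0 for all v. Let p and S v (v ∈ V) be polynomials in MvPolynomial (Fin n) ℂ satisfying p * S v = Σ_{u ∈ Chi(v)} S u (a finite sum) for every v ∈ V. Let Λ : ℓ²(V) → ℓ²(V) be a bounded linear operator with Λ χ_v = Σ_{u ∈ Chi(v)} (β u / β v) • χ_u for all v. Let w : Fin n → ℂ be such that the family (‖MvPolynomial.eval w (S v)‖²/(β v)²)_{v ∈ V} is summable, and let γ_w ∈ ℓ²(V) be the element whose v-th coordinate is conj (MvPolynomial.eval w (S v)) / (β v). Then the adjoint of Λ satisfies Λ† γ_w = conj (MvPolynomial.eval w p) • γ_w, i.e., conj(p(w)) is an eigenvalue of the adjoint of the multiplication operator T_p with eigenvector corresponding to the reproducing kernel at the bounded point evaluation w. -/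
open scoped ComplexConjugate

/-- `conj(p(w))` is an eigenvalue of the adjoint of the multiplication operator `T_p`
(realized as the β-weighted shift `Λ` on `ℓ²(V)`), with eigenvector the reproducing
kernel vector `γ_w` at a bounded point evaluation `w`. -/
theorem stmt_8 {V : Type*} [DecidableEq V] (n : ℕ) (E : V → V → Prop)
    (hfin : ∀ v : V, {u | E v u}.Finite)
    (β : V → ℝ) (hβ : ∀ v : V, 0 < β v)
    (p : MvPolynomial (Fin n) ℂ) (S : V → MvPolynomial (Fin n) ℂ)
    (hpS : ∀ v : V, p * S v = ∑ u ∈ (hfin v).toFinset, S u)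
    (Λ : lp (fun _ : V => ℂ) 2 →L[ℂ] lp (fun _ : V => ℂ) 2)
    (hΛ : ∀ v : V,
      HasSum
        (fun u : {u | E v u} => ((β (u : V) / β v : ℝ) : ℂ) • lp.single 2 (u : V) (1 : ℂ))
        (Λ (lp.single 2 v 1)))
    (w : Fin n → ℂ)
    (hw : Summable fun v : V => ‖MvPolynomial.eval w (S v)‖ ^ 2 / (β v) ^ 2)
    (γ : lp (fun _ : V => ℂ) 2)
    (hγ : ∀ v : V, γ v = (starRingEnd ℂ) (MvPolynomial.eval w (S v)) / (β v : ℂ)) :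
    ContinuousLinearMap.adjoint Λ γ = (starRingEnd ℂ) (MvPolynomial.eval w p) • γ := by
  apply lp.ext
  funext v
  have hβv : (β v : ℂ) ≠ 0 := by exact_mod_cast (hβ v).ne'
  -- the inner product ⟪γ, Λ χ_v⟫ as a sum
  have h1 : HasSum
      (fun u : {u | E v u} => ((β (u : V) / β v : ℝ) : ℂ) * conj (γ (u : V)))
      (inner ℂ γ (Λ (lp.single 2 v 1)) : ℂ) := by
    have := (hΛ v).mapL (innerSL ℂ γ)
    convert this using 2 with u
    rfl
    simp [lp.inner_single_right, RCLike.inner_apply, mul_comm]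
    rfl
  -- the same sum computed explicitly
  have hterm : ∀ u : {u | E v u},
      ((β (u : V) / β v : ℝ) : ℂ) * conj (γ (u : V))
        = MvPolynomial.eval w (S (u : V)) / (β v : ℂ) := by
    intro u
    have hβu : (β (u : V) : ℂ) ≠ 0 := by exact_mod_cast (hβ (u : V)).ne'
    rw [hγ]
    push_cast
    rw [map_div₀, Complex.conj_conj, Complex.conj_ofReal]
    field_simp
  have h2 : HasSum
      (fun u : {u | E v u} => ((β (u : V) / β v : ℝ) : ℂ) * conj (γ (u : V)))
      (MvPolynomial.eval w (p * S v) / (β v : ℂ)) := by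
    haveI := (hfin v).fintype
    have hsum : HasSum (fun u : {u | E v u} => MvPolynomial.eval w (S (u : V)) / (β v : ℂ))
        (∑ u ∈ (hfin v).toFinset, MvPolynomial.eval w (S u) / (β v : ℂ)) := by
      rw [Finset.sum_subtype (hfin v).toFinset (fun x => (hfin v).mem_toFinset)
        (fun u => MvPolynomial.eval w (S u) / (β v : ℂ))]
      exact hasSum_fintype _
    convert hsum using 1
    · funext u; exact hterm u
    · rw [hpS, map_sum, Finset.sum_div]
  have hEq : (inner ℂ γ (Λ (lp.single 2 v 1)) : ℂ)
      = MvPolynomial.eval w (p * S v) / (β v : ℂ) := h1.unique h2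
  -- relate to the coordinate of the adjoint
  have h3 : conj ((ContinuousLinearMap.adjoint Λ γ) v)
      = (inner ℂ γ (Λ (lp.single 2 v 1)) : ℂ) := by
    rw [← ContinuousLinearMap.adjoint_inner_left]
    have : (inner ℂ (ContinuousLinearMap.adjoint Λ γ) (lp.single 2 v 1) : ℂ)
        = conj ((ContinuousLinearMap.adjoint Λ γ) v) := by
      rw [lp.inner_single_right]
      simp [RCLike.inner_apply]
    rw [this]
  have h4 : conj ((ContinuousLinearMap.adjoint Λ γ) v)
      = MvPolynomial.eval w (p * S v) / (β v : ℂ) := h3.trans hEq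
  have h5 : (ContinuousLinearMap.adjoint Λ γ) v
      = conj (MvPolynomial.eval w (p * S v) / (β v : ℂ)) := by
    rw [← h4, Complex.conj_conj]
  rw [lp.coeFn_smul, Pi.smul_apply, h5, hγ, map_mul, smul_eq_mul, map_div₀,
    Complex.conj_ofReal, map_mul]
  ring
end

section
/- Fix n ≥ 1 and 1 ≤ k ≤ n. Let P_anti = {u : Fin n → ℕ | u is strictly decreasing, i.e., StrictAnti u}, and define the relation E on P_anti by: E u v if and only if (∀ j, u j ≤ v j ∧ v j ≤ u j + 1) and Σ_j (v j − u j) = k. Then the directed graph (P_anti, E) is a generalized directed semi-tree with parameter m_k ≤ Nat.choose n k; explicitly: (a) E has no circuit, i.e., there is no u ∈ P_anti with Relation.TransGen E u u, and (b) for all distinct u, v ∈ P_anti, the set Chi(u) ∩ Chi(v) = {w | E u w ∧ E v w} has at most Nat.choose n k elements (the countability of the set of connected components being automatic since P_anti is countable). -/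
/-- The directed graph `G_anti^{(k)}` on the strictly decreasing tuples `P_anti`,
with edges given by adding a 0/1 vector with exactly `k` ones, is a generalized
directed semi-tree with parameter `m_k ≤ n.choose k`: it has no circuit and any two
distinct vertices have at most `n.choose k` common children. -/
theorem stmt_11 (n k : ℕ) (hn : 1 ≤ n) (hk : 1 ≤ k) (hkn : k ≤ n)
    (E : {u : Fin n → ℕ // StrictAnti u} → {u : Fin n → ℕ // StrictAnti u} → Prop)
    (hE : ∀ u v : {u : Fin n → ℕ // StrictAnti u},
      E u v ↔ (∀ j : Fin n, u.1 j ≤ v.1 j ∧ v.1 j ≤ u.1 j + 1) ∧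
        (∑ j : Fin n, (v.1 j - u.1 j)) = k) :
    (¬ ∃ u : {u : Fin n → ℕ // StrictAnti u}, Relation.TransGen E u u) ∧
    ∀ u v : {u : Fin n → ℕ // StrictAnti u}, u ≠ v →
      Set.ncard {w | E u w ∧ E v w} ≤ Nat.choose n k := by
  have key : ∀ a b, E a b → (∑ j, a.1 j) < (∑ j, b.1 j) := by
    intro a b hab
    rw [hE] at hab
    obtain ⟨h1, h2⟩ := hab
    have hsum : ∑ j, b.1 j = (∑ j, a.1 j) + k := by
      rw [← h2, ← Finset.sum_add_distrib]
      apply Finset.sum_congr rfl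
      intro j _
      have := h1 j
      omega
    omega
  constructor
  · rintro ⟨u, hu⟩
    have mono : ∀ a b, Relation.TransGen E a b → (∑ j, a.1 j) < (∑ j, b.1 j) := by
      intro a b h
      induction h with
      | single h => exact key _ _ h
      | tail _ h ih => exact ih.trans (key _ _ h)
    exact absurd (mono _ _ hu) (lt_irrefl _)
  · intro u v _
    set t : Set (Finset (Fin n)) :=
      (Finset.powersetCard k (Finset.univ : Finset (Fin n)) : Set (Finset (Fin n))) with ht
    have hcard : t.ncard = n.choose k := by
      rw [ht, Set.ncard_coe_finset, Finset.card_powersetCard, Finset.card_univ,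
        Fintype.card_fin]
    have hle : Set.ncard {w | E u w ∧ E v w} ≤ t.ncard := by
      apply Set.ncard_le_ncard_of_injOn
        (fun w => Finset.univ.filter (fun j => w.1 j = u.1 j + 1))
      · intro w hw
        obtain ⟨h1, h2⟩ := (hE u w).mp hw.1
        rw [ht]
        simp only [Finset.mem_coe, Finset.mem_powersetCard]
        refine ⟨Finset.subset_univ _, ?_⟩
        rw [← h2]
        rw [Finset.card_filter]
        apply Finset.sum_congr rfl
        intro j _
        have := h1 j
        by_cases h : w.1 j = u.1 j + 1 <;> simp [h] <;> omega
      · intro w1 hw1 w2 hw2 heq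
        obtain ⟨h1, _⟩ := (hE u w1).mp hw1.1
        obtain ⟨h2, _⟩ := (hE u w2).mp hw2.1
        apply Subtype.ext
        funext j
        have e1 := h1 j
        have e2 := h2 j
        have : (j ∈ Finset.univ.filter (fun j => w1.1 j = u.1 j + 1)) ↔
            (j ∈ Finset.univ.filter (fun j => w2.1 j = u.1 j + 1)) := by
          simp only at heq; rw [heq]
        simp only [Finset.mem_filter, Finset.mem_univ, true_and] at this
        omega
    omega
end

section
/- Fix n ≥ 1 and 1 ≤ k ≤ n. Let P_sym = {u : Fin n → ℕ | u is nonincreasing, i.e., i ≤ j → u j ≤ u i}, and define the relation E on P_sym by: E u v if and only if (∀ j, u j ≤ v j ∧ v j ≤ u j + 1) and Σ_j (v j − u j) = k. Then the directed graph (P_sym, E) is a generalized directed semi-tree with parameter r_k ≤ Nat.choose n k; explicitly: (a) E has no circuit, i.e., there is no u ∈ P_sym with Relation.TransGen E u u, and (b) for all distinct u, v ∈ P_sym, the set Chi(u) ∩ Chi(v) = {w | E u w ∧ E v w} has at most Nat.choose n k elements (the countability of the set of connected components being automatic since P_sym is countable). -/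
/-- The directed graph `G_sym^{(k)}` on the nonincreasing tuples (partitions) `P_sym`,
with edges given by adding a 0/1 vector with exactly `k` ones, is a generalized
directed semi-tree with parameter `r_k ≤ n.choose k`: it has no circuit and any two
distinct vertices have at most `n.choose k` common children. -/
theorem stmt_12 (n k : ℕ) (hn : 1 ≤ n) (hk : 1 ≤ k) (hkn : k ≤ n)
    (E : {u : Fin n → ℕ // Antitone u} → {u : Fin n → ℕ // Antitone u} → Prop)
    (hE : ∀ u v : {u : Fin n → ℕ // Antitone u},
      E u v ↔ (∀ j : Fin n, u.1 j ≤ v.1 j ∧ v.1 j ≤ u.1 j + 1) ∧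
        (∑ j : Fin n, (v.1 j - u.1 j)) = k) :
    (¬ ∃ u : {u : Fin n → ℕ // Antitone u}, Relation.TransGen E u u) ∧
    ∀ u v : {u : Fin n → ℕ // Antitone u}, u ≠ v →
      Set.ncard {w | E u w ∧ E v w} ≤ Nat.choose n k := by
  have key : ∀ a b, E a b → (∑ j : Fin n, a.1 j) < (∑ j : Fin n, b.1 j) := by
    intro a b hab
    rw [hE] at hab
    obtain ⟨h1, h2⟩ := hab
    have hsum : (∑ j : Fin n, b.1 j)
        = (∑ j : Fin n, (b.1 j - a.1 j)) + ∑ j : Fin n, a.1 j := by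
      rw [← Finset.sum_add_distrib]
      exact Finset.sum_congr rfl fun j _ => (Nat.sub_add_cancel (h1 j).1).symm
    omega
  have mono : ∀ a b, Relation.TransGen E a b →
      (∑ j : Fin n, a.1 j) < (∑ j : Fin n, b.1 j) := by
    intro a b h
    induction h with
    | single h => exact key _ _ h
    | tail _ h ih => exact ih.trans (key _ _ h)
  constructor
  · rintro ⟨u, hu⟩
    exact lt_irrefl _ (mono u u hu)
  · intro u v _
    have hle : Set.ncard {w | E u w ∧ E v w}
        ≤ Set.ncard {s : Finset (Fin n) | s.card = k} := by
      apply Set.ncard_le_ncard_of_injOn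
        (fun w => Finset.univ.filter fun j => w.1 j = u.1 j + 1)
      · intro w hw
        obtain ⟨h1, h2⟩ := (hE u w).mp hw.1
        simp only [Set.mem_setOf_eq, Finset.card_filter]
        rw [← h2]
        refine Finset.sum_congr rfl fun j _ => ?_
        have := h1 j
        split <;> omega
      · intro w hw w' hw' heq
        obtain ⟨h1, _⟩ := (hE u w).mp hw.1
        obtain ⟨h1', _⟩ := (hE u w').mp hw'.1
        have hj : ∀ j : Fin n, (w.1 j = u.1 j + 1) ↔ (w'.1 j = u.1 j + 1) := by
          intro j
          have := Finset.ext_iff.mp heq j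
          simpa using this
        apply Subtype.ext
        funext j
        have := h1 j
        have := h1' j
        have := hj j
        omega
    have heq : {s : Finset (Fin n) | s.card = k}
        = ↑(Finset.powersetCard k (Finset.univ : Finset (Fin n))) := by
      ext s; simp [Finset.mem_powersetCard_univ]
    rw [heq, Set.ncard_coe_finset, Finset.card_powersetCard, Finset.card_univ,
      Fintype.card_fin] at hle
    exact hle
end

section
/- Let n ≥ 1 and 1 ≤ k ≤ n, and let u : Fin n → ℕ be strictly decreasing (StrictAnti u). In the polynomial ring MvPolynomial (Fin n) ℂ, let a_u denote the determinant of the n×n matrix whose (i,j)-entry is (X j)^(u i), and let s_k := MvPolynomial.esymm (Fin n) ℂ k be the k-th elementary symmetric polynomial. Then s_k * a_u = Σ_{v ∈ I_u^{(k),anti}} a_v, where I_u^{(k),anti} is the (finite) set of strictly decreasing v : Fin n → ℕ with u j ≤ v j ≤ u j + 1 for all j and Σ_j (v j − u j) = k. -/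
open MvPolynomial Finset

/-- The antisymmetrized monomial `a_u = det((X_j)^(u_i))`. -/
noncomputable def antiMonomial (n : ℕ) (u : Fin n → ℕ) : MvPolynomial (Fin n) ℂ :=
  Matrix.det (Matrix.of fun i j : Fin n => (MvPolynomial.X j : MvPolynomial (Fin n) ℂ) ^ u i)

lemma antiMonomial_eq_sum (n : ℕ) (v : Fin n → ℕ) :
    antiMonomial n v = ∑ σ : Equiv.Perm (Fin n),
      ((Equiv.Perm.sign σ : ℤ) : MvPolynomial (Fin n) ℂ) * ∏ i, X i ^ v (σ i) := by
  simp [antiMonomial, Matrix.det_apply']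

lemma antiMonomial_eq_zero (n : ℕ) (v : Fin n → ℕ) (h : ¬ Function.Injective v) :
    antiMonomial n v = 0 := by
  simp only [Function.Injective, not_forall] at h
  obtain ⟨i, j, hij, hne⟩ := h
  exact Matrix.det_zero_of_row_eq hne (by funext c; simp [Matrix.of_apply, hij])


lemma key (n k : ℕ) (u : Fin n → ℕ) :
    esymm (Fin n) ℂ k * antiMonomial n u =
      ∑ T ∈ powersetCard k (univ : Finset (Fin n)),
        antiMonomial n (fun i => u i + if i ∈ T then 1 else 0) := by
  simp only [antiMonomial_eq_sum, Finset.mul_sum]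
  rw [Finset.sum_comm]
  refine Finset.sum_congr rfl fun σ _ => ?_
  have reindex : (∑ T ∈ powersetCard k (univ : Finset (Fin n)),
      (((Equiv.Perm.sign σ : ℤ) : MvPolynomial (Fin n) ℂ) *
        ∏ i, X i ^ (u (σ i) + if σ i ∈ T then 1 else 0)))
      = ∑ T ∈ powersetCard k (univ : Finset (Fin n)),
      (((Equiv.Perm.sign σ : ℤ) : MvPolynomial (Fin n) ℂ) *
        ∏ i, X i ^ (u (σ i) + if i ∈ T then 1 else 0)) := by
    refine Finset.sum_nbij' (fun T => T.map σ.symm.toEmbedding)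
      (fun T => T.map σ.toEmbedding) ?_ ?_ ?_ ?_ ?_
    · intro T hT; simp only [Finset.mem_powersetCard_univ, Finset.card_map] at *; exact hT
    · intro T hT; simp only [Finset.mem_powersetCard_univ, Finset.card_map] at *; exact hT
    · intro T _; ext x; simp [Finset.mem_map_equiv]
    · intro T _; ext x; simp [Finset.mem_map_equiv]
    · intro T _
      congr 1
      refine Finset.prod_congr rfl fun i _ => ?_
      congr 1
      simp [Finset.mem_map_equiv]
  rw [show (∑ x ∈ powersetCard k (univ : Finset (Fin n)),
      ((Equiv.Perm.sign σ : ℤ) : MvPolynomial (Fin n) ℂ) *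
        ∏ i, X i ^ ((fun i => u i + if i ∈ x then 1 else 0) (σ i))) =
    ∑ T ∈ powersetCard k (univ : Finset (Fin n)),
      (((Equiv.Perm.sign σ : ℤ) : MvPolynomial (Fin n) ℂ) *
        ∏ i, X i ^ (u (σ i) + if σ i ∈ T then 1 else 0)) from rfl, reindex,
    MvPolynomial.esymm, Finset.sum_mul]
  refine Finset.sum_congr rfl fun T _ => ?_
  have : (∏ i, (X i : MvPolynomial (Fin n) ℂ) ^ (u (σ i) + if i ∈ T then 1 else 0)) =
      (∏ i ∈ T, (X i : MvPolynomial (Fin n) ℂ)) *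
        ∏ i, (X i : MvPolynomial (Fin n) ℂ) ^ u (σ i) := by
    simp only [pow_add]
    rw [Finset.prod_mul_distrib, mul_comm]
    congr 1
    rw [show (∏ i, (X i : MvPolynomial (Fin n) ℂ) ^ (if i ∈ T then 1 else 0)) =
        ∏ i, (if i ∈ T then (X i : MvPolynomial (Fin n) ℂ) else 1) from
      Finset.prod_congr rfl fun i _ => by split <;> simp]
    rw [Finset.prod_ite_mem, Finset.univ_inter]
  rw [this]
  ring

/-- The antisymmetric form of the Pieri formula: for strictly decreasing `u`,
`s_k · a_u = Σ_{v ∈ I_u^{(k),anti}} a_v`, the sum running over the strictly decreasing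
`v` obtained from `u` by adding a 0/1 vector with exactly `k` ones. -/
theorem stmt_13 (n k : ℕ) (hn : 1 ≤ n) (hk : 1 ≤ k) (hkn : k ≤ n)
    (u : Fin n → ℕ) (hu : StrictAnti u)
    (hfin : Set.Finite {v : Fin n → ℕ | StrictAnti v ∧
      (∀ j : Fin n, u j ≤ v j ∧ v j ≤ u j + 1) ∧ (∑ j : Fin n, (v j - u j)) = k}) :
    MvPolynomial.esymm (Fin n) ℂ k * antiMonomial n u =
      ∑ v ∈ hfin.toFinset, antiMonomial n v := by
  rw [key n k u]
  rw [← Finset.sum_filter_add_sum_filter_not (powersetCard k (univ : Finset (Fin n)))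
    (fun T => StrictAnti (fun i => u i + if i ∈ T then 1 else 0))]
  have hanti : ∀ T : Finset (Fin n), Antitone (fun i => u i + if i ∈ T then 1 else 0) := by
    intro T i j hij
    rcases eq_or_lt_of_le hij with rfl | hlt
    · exact le_rfl
    · have h1 : u j + 1 ≤ u i := hu hlt
      simp only
      split <;> split <;> omega
  have hzero : ∑ T ∈ (powersetCard k (univ : Finset (Fin n))).filter
      (fun T => ¬ StrictAnti (fun i => u i + if i ∈ T then 1 else 0)),
      antiMonomial n (fun i => u i + if i ∈ T then 1 else 0) = 0 := by
    refine Finset.sum_eq_zero fun T hT => ?_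
    rw [Finset.mem_filter] at hT
    refine antiMonomial_eq_zero n _ ?_
    intro hinj
    refine hT.2 fun i j hij => ?_
    refine lt_of_le_of_ne (hanti T hij.le) fun he => ?_
    exact absurd (hinj he.symm) (ne_of_lt hij)
  rw [hzero, add_zero]
  refine Finset.sum_nbij' (fun T => (fun j => u j + if j ∈ T then 1 else 0))
    (fun v => univ.filter fun j => u j < v j) ?_ ?_ ?_ ?_ ?_
  · intro T hT
    rw [Finset.mem_filter, Finset.mem_powersetCard_univ] at hT
    rw [Set.Finite.mem_toFinset, Set.mem_setOf_eq]
    refine ⟨hT.2, fun j => ⟨by simp, by simp only; split <;> omega⟩, ?_⟩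
    have : ∀ j : Fin n, (u j + if j ∈ T then 1 else 0) - u j = if j ∈ T then 1 else 0 := by
      intro j; omega
    simp only [this]
    rw [Finset.sum_ite_mem, Finset.univ_inter, Finset.sum_const, smul_eq_mul, mul_one]
    exact hT.1
  · intro v hv
    rw [Set.Finite.mem_toFinset, Set.mem_setOf_eq] at hv
    obtain ⟨hva, hvb, hvs⟩ := hv
    have hcard : (univ.filter fun j => u j < v j).card = k := by
      rw [Finset.card_filter]
      rw [← hvs]
      refine Finset.sum_congr rfl fun j _ => ?_
      have := hvb j
      split <;> omega
    rw [Finset.mem_filter, Finset.mem_powersetCard_univ]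
    refine ⟨hcard, ?_⟩
    have heq : (fun i => u i + if i ∈ univ.filter fun j => u j < v j then 1 else 0) = v := by
      funext j
      simp only [Finset.mem_filter, Finset.mem_univ, true_and]
      have := hvb j
      split <;> omega
    rw [heq]; exact hva
  · intro T hT
    ext j
    simp only [Finset.mem_filter, Finset.mem_univ, true_and]
    by_cases hj : j ∈ T <;> simp [hj]
  · intro v hv
    rw [Set.Finite.mem_toFinset, Set.mem_setOf_eq] at hv
    funext j
    simp only [Finset.mem_filter, Finset.mem_univ, true_and]
    have := hv.2.1 j
    split <;> omega
  · intro T _; rfl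
end

section
/- Let n ≥ 1 and 1 ≤ k ≤ n, and let u : Fin n → ℕ be nonincreasing (i ≤ j → u j ≤ u i). In MvPolynomial (Fin n) ℂ, define the monomial symmetric polynomial m_u as the sum, over the set of distinct rearrangements w of u (the orbit of u under precomposition by permutations σ ∈ Equiv.Perm (Fin n), each distinct exponent tuple counted once), of the monomial X^w = Π_j (X j)^(w j). Then there exist positive rational numbers c_v, indexed by the nonincreasing tuples v : Fin n → ℕ with u j ≤ v j ≤ u j + 1 for all j and Σ_j (v j − u j) = k, such that (MvPolynomial.esymm (Fin n) ℂ k) * m_u = Σ_v ((c_v : ℂ)) • m_v. -/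
/-- The monomial symmetric polynomial `m_u`: the sum, over the set of distinct
rearrangements of `u` (the orbit of `u` under precomposition by permutations), of the
corresponding monomial. -/
noncomputable def monSymPoly (n : ℕ) (u : Fin n → ℕ) : MvPolynomial (Fin n) ℂ :=
  ∑ w ∈ Finset.image (fun σ : Equiv.Perm (Fin n) => u ∘ σ) Finset.univ,
    ∏ j : Fin n, (MvPolynomial.X j : MvPolynomial (Fin n) ℂ) ^ w j

open Finset MvPolynomial

namespace Stmt14

variable {n : ℕ}

/-- permutation invariance of filter cardinality -/
lemma card_filter_perm (P : Fin n → Prop) [DecidablePred P] (σ : Equiv.Perm (Fin n)) :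
    #(univ.filter fun j => P (σ j)) = #(univ.filter P) := by
  refine Finset.card_bij (fun j _ => σ j) ?_ ?_ ?_
  · intro a ha
    simp only [Finset.mem_filter, Finset.mem_univ, true_and] at ha ⊢
    exact ha
  · intro a _ b _ h; exact σ.injective h
  · intro b hb; exact ⟨σ⁻¹ b, by simp_all, by simp⟩

lemma antitone_count {h : Fin n → ℕ} (hh : Antitone h) (i : Fin n) (t : ℕ) :
    t ≤ h i ↔ (i : ℕ) + 1 ≤ #(univ.filter fun j => t ≤ h j) := by
  constructor
  · intro ht
    calc (i:ℕ) + 1 = #(Finset.Iic i) := (Fin.card_Iic i).symm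
    _ ≤ _ := by
        apply Finset.card_le_card
        intro j hj
        simp only [Finset.mem_Iic] at hj
        simp only [Finset.mem_filter, Finset.mem_univ, true_and]
        exact le_trans ht (hh hj)
  · intro hc
    by_contra hlt
    push_neg at hlt
    have hsub : (univ.filter fun j => t ≤ h j) ⊆ Finset.Iio i := by
      intro j hj
      simp only [Finset.mem_filter, Finset.mem_univ, true_and] at hj
      simp only [Finset.mem_Iio]
      by_contra hji
      push_neg at hji
      exact absurd (le_trans hj (hh hji)) (not_le.mpr hlt)
    have := Finset.card_le_card hsub
    rw [Fin.card_Iio] at this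
    omega

lemma antitone_le {a b : Fin n → ℕ} (ha : Antitone a) (hb : Antitone b)
    (σ τ : Equiv.Perm (Fin n)) (hab : ∀ j, a (σ j) ≤ b (τ j)) : ∀ i, a i ≤ b i := by
  intro i
  rw [antitone_count hb i (a i)]
  calc (i:ℕ) + 1 ≤ #(univ.filter fun j => a i ≤ a j) := (antitone_count ha i (a i)).1 le_rfl
  _ = #(univ.filter fun j => a i ≤ a (σ j)) := (card_filter_perm _ σ).symm
  _ ≤ #(univ.filter fun j => a i ≤ b (τ j)) := by
      apply Finset.card_le_card
      intro j hj
      simp only [Finset.mem_filter, Finset.mem_univ, true_and] at hj ⊢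
      exact le_trans hj (hab j)
  _ = _ := card_filter_perm (fun j => a i ≤ b j) τ

lemma antitone_unique {a b : Fin n → ℕ} (ha : Antitone a) (hb : Antitone b)
    (σ : Equiv.Perm (Fin n)) (h : b = a ∘ σ) : a = b := by
  funext i
  refine le_antisymm ?_ ?_
  · exact antitone_le ha hb 1 σ⁻¹ (fun j => by simp [h]) i
  · exact antitone_le hb ha 1 σ (fun j => by simp [h]) i

lemma exists_antitone_sort (β : Fin n → ℕ) : ∃ σ : Equiv.Perm (Fin n), Antitone (β ∘ σ) := by
  refine ⟨(Fin.revPerm).trans (Tuple.sort β), ?_⟩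
  have hm : Monotone (β ∘ Tuple.sort β) := Tuple.monotone_sort β
  intro i j hij
  exact hm (by simpa using Fin.rev_le_rev.mpr hij)

/-- the orbit of `u` -/
def orb (u : Fin n → ℕ) : Finset (Fin n → ℕ) :=
  Finset.image (fun σ : Equiv.Perm (Fin n) => u ∘ σ) Finset.univ

/-- exponent produced by a pair -/
def F (S : Finset (Fin n)) (w : Fin n → ℕ) : Fin n → ℕ :=
  fun j => (if j ∈ S then 1 else 0) + w j

/-- the count -/
def NN (k : ℕ) (u β : Fin n → ℕ) : ℕ :=
  #(((Finset.powersetCard k univ) ×ˢ orb u).filter fun p => F p.1 p.2 = β)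


lemma orb_comp {u w : Fin n → ℕ} (hw : w ∈ orb u) (π : Equiv.Perm (Fin n)) :
    w ∘ π ∈ orb u := by
  obtain ⟨σ, -, rfl⟩ := Finset.mem_image.mp hw
  exact Finset.mem_image.mpr ⟨π.trans σ, Finset.mem_univ _, rfl⟩

lemma F_comp (S : Finset (Fin n)) (w : Fin n → ℕ) (π : Equiv.Perm (Fin n)) :
    F (S.image π) (w ∘ ⇑π⁻¹) = (F S w) ∘ ⇑π⁻¹ := by
  funext j
  have hmem : j ∈ S.image π ↔ π⁻¹ j ∈ S := by
    simp only [Finset.mem_image]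
    constructor
    · rintro ⟨a, ha, rfl⟩; simpa using ha
    · intro h; exact ⟨π⁻¹ j, h, by simp⟩
  simp only [F, Function.comp_apply, hmem]

lemma NN_comp (k : ℕ) (u β : Fin n → ℕ) (π : Equiv.Perm (Fin n)) :
    NN k u (β ∘ π) = NN k u β := by
  unfold NN
  refine Finset.card_bij' (fun p _ => (p.1.image ⇑π, p.2 ∘ ⇑π⁻¹))
    (fun p _ => (p.1.image ⇑π⁻¹, p.2 ∘ ⇑π)) ?_ ?_ ?_ ?_
  · rintro ⟨S, w⟩ hp
    simp only [Finset.mem_filter, Finset.mem_product, Finset.mem_powersetCard_univ] at hp ⊢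
    obtain ⟨⟨hS, hw⟩, hF⟩ := hp
    refine ⟨⟨by rw [Finset.card_image_of_injective _ π.injective]; exact hS,
      orb_comp hw π⁻¹⟩, ?_⟩
    rw [F_comp S w π, hF]
    funext j; simp
  · rintro ⟨S, w⟩ hp
    simp only [Finset.mem_filter, Finset.mem_product, Finset.mem_powersetCard_univ] at hp ⊢
    obtain ⟨⟨hS, hw⟩, hF⟩ := hp
    refine ⟨⟨by rw [Finset.card_image_of_injective _ π⁻¹.injective]; exact hS,
      orb_comp hw π⟩, ?_⟩
    have := F_comp S w π⁻¹
    simp only [inv_inv] at this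
    rw [this, hF]
  · rintro ⟨S, w⟩ hp
    simp only [Prod.mk.injEq]
    constructor
    · rw [Finset.image_image]
      have : (⇑π⁻¹ ∘ ⇑π : Fin n → Fin n) = id := by funext x; simp
      rw [this, Finset.image_id]
    · funext x; simp
  · rintro ⟨S, w⟩ hp
    simp only [Prod.mk.injEq]
    constructor
    · rw [Finset.image_image]
      have : (⇑π ∘ ⇑π⁻¹ : Fin n → Fin n) = id := by funext x; simp
      rw [this, Finset.image_id]
    · funext x; simp

lemma NN_support {k : ℕ} {u β : Fin n → ℕ} (hu : Antitone u) (σ0 : Equiv.Perm (Fin n))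
    (h0 : Antitone (β ∘ σ0)) (h : NN k u β ≠ 0) :
    (∀ j, u j ≤ (β ∘ σ0) j ∧ (β ∘ σ0) j ≤ u j + 1) ∧ (∑ j, ((β ∘ σ0) j - u j)) = k := by
  obtain ⟨⟨S, w⟩, hp⟩ := Finset.card_ne_zero.mp h |>.exists_mem
  simp only [Finset.mem_filter, Finset.mem_product, Finset.mem_powersetCard_univ] at hp
  obtain ⟨⟨hS, hw⟩, hF⟩ := hp
  obtain ⟨σ, -, rfl⟩ := Finset.mem_image.mp hw
  set v : Fin n → ℕ := β ∘ σ0 with hv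
  have hβ : ∀ j, β j = (if j ∈ S then 1 else 0) + u (σ j) := fun j => by
    rw [← hF]; rfl
  have hlow : ∀ i, u i ≤ v i := by
    refine antitone_le hu h0 σ σ0⁻¹ (fun j => ?_)
    have : v (σ0⁻¹ j) = β j := by simp [hv]
    rw [this, hβ j]; omega
  have hb1 : Antitone (fun j => u j + 1) := fun i j hij => by
    simpa using Nat.add_le_add_right (hu hij) 1
  have hhigh : ∀ i, v i ≤ u i + 1 := by
    refine antitone_le h0 hb1 1 (σ0.trans σ) (fun j => ?_)
    have : v ((1 : Equiv.Perm (Fin n)) j) = β (σ0 j) := rfl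
    rw [this, hβ (σ0 j)]
    simp only [Equiv.trans_apply]
    split <;> omega
  refine ⟨fun j => ⟨hlow j, hhigh j⟩, ?_⟩
  have hsv : ∑ j, v j = ∑ j, β j := Equiv.sum_comp σ0 β
  have hsβ : ∑ j, β j = k + ∑ j, u j := by
    calc ∑ j, β j = ∑ j, ((if j ∈ S then 1 else 0) + u (σ j)) := by
          exact Finset.sum_congr rfl (fun j _ => hβ j)
    _ = (∑ j, (if j ∈ S then 1 else 0)) + ∑ j, u (σ j) := Finset.sum_add_distrib
    _ = #S + ∑ j, u j := by
          rw [Equiv.sum_comp σ u]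
          congr 1
          rw [Finset.sum_ite_mem, Finset.univ_inter, Finset.sum_const, smul_eq_mul, mul_one]
    _ = k + ∑ j, u j := by rw [hS]
  have h1 : ∑ j, (v j - u j) + ∑ j, u j = ∑ j, v j := by
    rw [← Finset.sum_add_distrib]
    exact Finset.sum_congr rfl (fun j _ => by have := hlow j; omega)
  omega

lemma NN_pos {k : ℕ} {u v : Fin n → ℕ} (hb : ∀ j, u j ≤ v j ∧ v j ≤ u j + 1)
    (hs : (∑ j, (v j - u j)) = k) : 0 < NN k u v := by
  set S₀ : Finset (Fin n) := univ.filter (fun j => u j + 1 ≤ v j) with hS₀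
  have hcard : #S₀ = k := by
    rw [hS₀, Finset.card_filter, ← hs]
    exact Finset.sum_congr rfl (fun j _ => by have := hb j; split <;> omega)
  have hFeq : F S₀ u = v := by
    funext j
    simp only [F, hS₀, Finset.mem_filter, Finset.mem_univ, true_and]
    have := hb j
    split <;> omega
  have huorb : u ∈ orb u :=
    Finset.mem_image.mpr ⟨1, Finset.mem_univ _, rfl⟩
  rw [NN, Finset.card_pos]
  exact ⟨(S₀, u), Finset.mem_filter.mpr ⟨Finset.mem_product.mpr
    ⟨Finset.mem_powersetCard_univ.mpr hcard, huorb⟩, hFeq⟩⟩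



lemma prod_X_pow (w : Fin n → ℕ) :
    ∏ j : Fin n, (X j : MvPolynomial (Fin n) ℂ) ^ w j
      = monomial (Finsupp.equivFunOnFinite.symm w) 1 := by
  rw [← prod_X_pow_eq_monomial]
  refine (Finset.prod_subset (Finset.subset_univ _) ?_).symm
  · intro x _ hx
    have h0 : w x = 0 := Finsupp.notMem_support_iff.mp hx
    rw [h0, pow_zero]

lemma monSymPoly_eq (u : Fin n → ℕ) :
    monSymPoly n u = ∑ w ∈ orb u, monomial (Finsupp.equivFunOnFinite.symm w) 1 := by
  unfold monSymPoly orb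
  exact Finset.sum_congr rfl (fun w _ => by
    have := prod_X_pow (n := n) w
    simpa using this)

lemma coeff_monSymPoly (u : Fin n → ℕ) (d : Fin n →₀ ℕ) :
    coeff d (monSymPoly n u) = if (⇑d : Fin n → ℕ) ∈ orb u then 1 else 0 := by
  rw [monSymPoly_eq, coeff_sum]
  simp_rw [coeff_monomial]
  have hiff : ∀ w : Fin n → ℕ, (Finsupp.equivFunOnFinite.symm w = d) ↔ w = ⇑d := fun w =>
    Equiv.symm_apply_eq _
  simp_rw [hiff]
  exact Finset.sum_ite_eq' (orb u) (⇑d) (fun _ => 1)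

lemma exponent_add (S : Finset (Fin n)) (w : Fin n → ℕ) :
    (∑ i ∈ S, Finsupp.single i (1 : ℕ)) + Finsupp.equivFunOnFinite.symm w
      = Finsupp.equivFunOnFinite.symm (F S w) := by
  ext j
  simp only [Finsupp.add_apply, Finsupp.coe_equivFunOnFinite_symm, F]
  rw [Finset.sum_apply']
  simp_rw [Finsupp.single_apply]
  rw [Finset.sum_ite_eq' S j (fun _ => 1)]

lemma coeff_LHS (k : ℕ) (u : Fin n → ℕ) (d : Fin n →₀ ℕ) :
    coeff d (esymm (Fin n) ℂ k * monSymPoly n u) = (NN k u ⇑d : ℂ) := by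
  rw [esymm_eq_sum_monomial, monSymPoly_eq, Finset.sum_mul_sum]
  simp_rw [monomial_mul, one_mul, exponent_add]
  rw [coeff_sum]
  simp_rw [coeff_sum, coeff_monomial]
  have hiff : ∀ (S : Finset (Fin n)) (w : Fin n → ℕ),
      (Finsupp.equivFunOnFinite.symm (F S w) = d) ↔ F S w = ⇑d := fun S w =>
    Equiv.symm_apply_eq _
  simp_rw [hiff]
  rw [NN, Finset.card_filter, ← Finset.sum_product']
  push_cast [apply_ite (Nat.cast : ℕ → ℂ)]
  rfl

end Stmt14

/-- Pieri-type formula for monomial symmetric polynomials: for nonincreasing `u`,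
`s_k · m_u = Σ_v c_v m_v` with positive rational coefficients `c_v`, the sum running
over the nonincreasing `v` obtained from `u` by adding a 0/1 vector with `k` ones. -/
theorem stmt_14 (n k : ℕ) (hn : 1 ≤ n) (hk : 1 ≤ k) (hkn : k ≤ n)
    (u : Fin n → ℕ) (hu : Antitone u)
    (hfin : Set.Finite {v : Fin n → ℕ | Antitone v ∧
      (∀ j : Fin n, u j ≤ v j ∧ v j ≤ u j + 1) ∧ (∑ j : Fin n, (v j - u j)) = k}) :
    ∃ c : (Fin n → ℕ) → ℚ,
      (∀ v ∈ hfin.toFinset, 0 < c v) ∧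
      MvPolynomial.esymm (Fin n) ℂ k * monSymPoly n u =
        ∑ v ∈ hfin.toFinset, ((c v : ℂ)) • monSymPoly n v := by
  classical
  refine ⟨fun v => (Stmt14.NN k u v : ℚ), ?_, ?_⟩
  · intro v hv
    rw [Set.Finite.mem_toFinset] at hv
    have := Stmt14.NN_pos (k := k) hv.2.1 hv.2.2
    simp only []
    exact_mod_cast this
  · apply MvPolynomial.ext
    intro d
    rw [Stmt14.coeff_LHS, MvPolynomial.coeff_sum]
    simp_rw [MvPolynomial.coeff_smul, Stmt14.coeff_monSymPoly, smul_eq_mul]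
    set β : Fin n → ℕ := ⇑d with hβ
    obtain ⟨σ0, h0⟩ := Stmt14.exists_antitone_sort β
    set v0 : Fin n → ℕ := β ∘ σ0 with hv0
    have horb : ∀ v ∈ hfin.toFinset, (β ∈ Stmt14.orb v ↔ v = v0) := by
      intro v hv
      rw [Set.Finite.mem_toFinset] at hv
      constructor
      · intro hmem
        obtain ⟨σ, -, hσ⟩ := Finset.mem_image.mp hmem
        refine Stmt14.antitone_unique hv.1 h0 (σ0.trans σ) ?_
        funext x
        rw [hv0]
        simp only [Function.comp_apply, Equiv.trans_apply, ← hσ]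
      · rintro rfl
        refine Finset.mem_image.mpr ⟨σ0⁻¹, Finset.mem_univ _, ?_⟩
        funext x
        simp [hv0]
    rw [Finset.sum_congr rfl (fun v hv => by
      rw [if_congr (horb v hv) rfl rfl, mul_ite, mul_one, mul_zero])]
    rw [Finset.sum_ite_eq' hfin.toFinset v0 (fun v => ((Stmt14.NN k u v : ℚ) : ℂ))]
    have hβv0 : β = v0 ∘ ⇑σ0⁻¹ := by
      funext x; simp [hv0]
    have hNN : Stmt14.NN k u β = Stmt14.NN k u v0 := by
      rw [hβv0, Stmt14.NN_comp]
    by_cases hmem : v0 ∈ hfin.toFinset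
    · rw [if_pos hmem, hNN]
      push_cast
      ring
    · rw [if_neg hmem]
      have hzero : Stmt14.NN k u β = 0 := by
        by_contra hne
        obtain ⟨hb, hs⟩ := Stmt14.NN_support hu σ0 h0 hne
        exact hmem (Set.Finite.mem_toFinset hfin |>.mpr ⟨h0, hb, hs⟩)
      rw [hzero]
      norm_num
end

section
/- Let n ≥ 1, η ≥ 1, and let N be a nonempty finite set of tuples u : Fin n → ℕ with Σ_j u j = η for every u ∈ N. Define the relation E on ℕ-tuples by: for α, γ : Fin n → ℕ, E α γ if and only if there exists u ∈ N with γ = α + u (componentwise). Then the directed graph (Fin n → ℕ, E) is a generalized directed semi-tree with parameter c' ≤ card N; explicitly: (a) E has no circuit, i.e., there is no α with Relation.TransGen E α α, and (b) for all distinct α, γ : Fin n → ℕ, the set Chi(α) ∩ Chi(γ) = {w | E α w ∧ E γ w} has at most card N elements (the countability of the set of connected components being automatic since the vertex set is countable). (This is the graph induced by the multiplication operator by a homogeneous polynomial θ_i = Σ_{u ∈ N_i} a_u^{(i)} z^u of degree η_i on the Bergman space of a complete Reinhardt domain, acting on the monomial basis.) -/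
/-- The directed graph on `Fin n → ℕ` induced by the multiplication operator by a
homogeneous polynomial `θ = Σ_{u ∈ N} a_u z^u` of degree `η ≥ 1` (edges `α → α + u` for
`u ∈ N`) is a generalized directed semi-tree with parameter `c' ≤ card N`: it has no
circuit, and any two distinct vertices have at most `card N` common children. -/
theorem stmt_15 (n η : ℕ) (hn : 1 ≤ n) (hη : 1 ≤ η)
    (N : Finset (Fin n → ℕ)) (hN : N.Nonempty)
    (hdeg : ∀ u ∈ N, (∑ j : Fin n, u j) = η)
    (E : (Fin n → ℕ) → (Fin n → ℕ) → Prop)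
    (hE : ∀ α γ : Fin n → ℕ, E α γ ↔ ∃ u ∈ N, γ = α + u) :
    (¬ ∃ α : Fin n → ℕ, Relation.TransGen E α α) ∧
    ∀ α γ : Fin n → ℕ, α ≠ γ →
      Set.ncard {w | E α w ∧ E γ w} ≤ N.card := by
  have hstep : ∀ a b : Fin n → ℕ, E a b →
      (∑ j, a j) < ∑ j, b j := by
    intro a b hab
    obtain ⟨u, hu, rfl⟩ := (hE a b).1 hab
    simp only [Pi.add_apply, Finset.sum_add_distrib]
    have := hdeg u hu
    omega
  constructor
  · rintro ⟨α, hα⟩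
    have key : ∀ b, Relation.TransGen E α b → (∑ j, α j) < ∑ j, b j := by
      intro b hb
      induction hb with
      | single h => exact hstep _ _ h
      | tail _ h ih => exact ih.trans (hstep _ _ h)
    exact absurd (key α hα) (lt_irrefl _)
  · intro α γ _
    have hsub : {w | E α w ∧ E γ w} ⊆ ↑(N.image (α + ·)) := by
      rintro w ⟨hw, -⟩
      obtain ⟨u, hu, rfl⟩ := (hE α w).1 hw
      simp only [Finset.coe_image, Set.mem_image, Finset.mem_coe]
      exact ⟨u, hu, rfl⟩
    calc Set.ncard {w | E α w ∧ E γ w} ≤ (N.image (α + ·)).card := by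
          rw [← Set.ncard_coe_finset]
          exact Set.ncard_le_ncard hsub (Finset.finite_toSet _)
      _ ≤ N.card := Finset.card_image_le
end
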